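/- Let S be a map from the quantum operations Op(ℂ^m,ℂ^n) to the quantum operations Op(ℂ^{m'},ℂ^{n'}) satisfying S(p·Q + (1−p)·R) = p·S(Q) + (1−p)·S(R) for all quantum operations Q, R and all p ∈ [0,1], and S(0) = 0. Then S extends to a unique ℂ-linear map from the space of all linear maps (from m×m matrices to n×n matrices) to the space of all linear maps (from m'×m' matrices to n'×n' matrices) that agrees with S on the set of quantum operations. -/

import Mathlib

open scoped ComplexOrder Kronecker
open Matrix

noncomputable section

/-- The space of linear maps from `m × m` complex matrices to `n × n` complex matrices. -/
abbrev MatMap (m n : ℕ) := Matrix (Fin m) (Fin m) ℂ →ₗ[ℂ] Matrix (Fin n) (Fin n) ℂ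

/-- The Choi matrix `Choi(Q) = Σ_{i,j} Q(E_{ij}) ⊗ E_{ij}` of a linear map between
matrix spaces. -/
def choi {m n : ℕ} (Q : MatMap m n) : Matrix (Fin n × Fin m) (Fin n × Fin m) ℂ :=
  Matrix.of fun p q => Q (Matrix.single p.2 q.2 1) p.1 q.1

/-- A linear map is completely positive if its Choi matrix is positive semidefinite. -/
def IsCP {m n : ℕ} (Q : MatMap m n) : Prop := (choi Q).PosSemidef

/-- A quantum operation: a completely positive trace-non-increasing linear map. -/
def IsQOp {m n : ℕ} (Q : MatMap m n) : Prop :=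
  IsCP Q ∧ ∀ ρ : Matrix (Fin m) (Fin m) ℂ, ρ.PosSemidef → (Q ρ).trace ≤ ρ.trace

/-- A quantum channel: a completely positive trace-preserving linear map. -/
def IsChannel {m n : ℕ} (Q : MatMap m n) : Prop :=
  IsCP Q ∧ ∀ ρ : Matrix (Fin m) (Fin m) ℂ, (Q ρ).trace = ρ.trace

/-- A density matrix: positive semidefinite with unit trace. -/
def IsDensity {ι : Type*} [Fintype ι] (ρ : Matrix ι ι ℂ) : Prop :=
  ρ.PosSemidef ∧ ρ.trace = 1

/-- A rank-one orthogonal projection `|ψ⟩⟨ψ|` for a unit vector `ψ`. -/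
def IsRankOneProj {d : ℕ} (P : Matrix (Fin d) (Fin d) ℂ) : Prop :=
  ∃ ψ : Fin d → ℂ, star ψ ⬝ᵥ ψ = 1 ∧ P = Matrix.vecMulVec ψ (star ψ)

/-- A state space symmetry: a bijection between the sets of density matrices that
preserves convex combinations. -/
def IsStateSymmetry {ι κ : Type*} [Fintype ι] [Fintype κ]
    (S : Matrix ι ι ℂ → Matrix κ κ ℂ) : Prop :=
  Set.BijOn S {ρ | IsDensity ρ} {ρ | IsDensity ρ} ∧
  ∀ ρ σ : Matrix ι ι ℂ, IsDensity ρ → IsDensity σ → ∀ p : ℝ, 0 ≤ p → p ≤ 1 →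
    S ((p : ℂ) • ρ + ((1 - p : ℝ) : ℂ) • σ) = (p : ℂ) • S ρ + ((1 - p : ℝ) : ℂ) • S σ

/-- An operation space symmetry: a bijection between the sets of quantum operations that
preserves convex combinations and maps the zero map to the zero map. -/
def IsOpSymmetry {m n m' n' : ℕ} (S : MatMap m n → MatMap m' n') : Prop :=
  Set.BijOn S {Q | IsQOp Q} {Q | IsQOp Q} ∧
  (∀ Q R : MatMap m n, IsQOp Q → IsQOp R → ∀ p : ℝ, 0 ≤ p → p ≤ 1 →
    S ((p : ℂ) • Q + ((1 - p : ℝ) : ℂ) • R) = (p : ℂ) • S Q + ((1 - p : ℝ) : ℂ) • S R) ∧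
  S 0 = 0

/-- Transport of a square matrix along an equality of dimensions. -/
def castMat {m n : ℕ} (h : m = n) (A : Matrix (Fin m) (Fin m) ℂ) :
    Matrix (Fin n) (Fin n) ℂ :=
  Matrix.reindex (finCongr h) (finCongr h) A

/-- The unitary channel `ρ ↦ U ρ U†` as a linear map. -/
def adjAction {d : ℕ} (U : Matrix (Fin d) (Fin d) ℂ) : MatMap d d where
  toFun ρ := U * ρ * Uᴴ
  map_add' x y := by simp [Matrix.mul_add, Matrix.add_mul]
  map_smul' c x := by simp [Matrix.mul_smul, Matrix.smul_mul]

/-- The Hilbert–Schmidt adjoint of a linear map between matrix spaces; it is the unique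
linear map satisfying `Tr[A† Q(B)] = Tr[(Q†(A))† B]` for all `A`, `B`. -/
def hsAdjoint {m n : ℕ} (Q : MatMap m n) : MatMap n m where
  toFun A := Matrix.of fun i j => ((Q (Matrix.single i j 1))ᴴ * A).trace
  map_add' A B := by
    ext i j
    simp [Matrix.mul_add, Matrix.trace_add]
  map_smul' c A := by
    ext i j
    simp [Matrix.mul_smul, Matrix.trace_smul]

open scoped Classical in
/-- The positive semidefinite square root (junk value `0` on non-psd inputs). -/
noncomputable def psqrt {d : ℕ} (M : Matrix (Fin d) (Fin d) ℂ) : Matrix (Fin d) (Fin d) ℂ :=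
  if h : M.PosSemidef then
    (h.1.eigenvectorUnitary : Matrix (Fin d) (Fin d) ℂ) *
      Matrix.diagonal ((RCLike.ofReal : ℝ → ℂ) ∘ Real.sqrt ∘ h.1.eigenvalues) *
      (star h.1.eigenvectorUnitary : Matrix (Fin d) (Fin d) ℂ)
  else 0

/-- The fidelity `F(ρ,σ) = (Tr[√(√ρ σ √ρ)])²` of two density matrices. -/
noncomputable def fidelity {d : ℕ} (ρ σ : Matrix (Fin d) (Fin d) ℂ) : ℝ :=
  ((psqrt (psqrt ρ * σ * psqrt ρ)).trace.re) ^ 2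

/-- The double transpose `ρ ↦ [Φ(ρᵀ)]ᵀ` of a linear map between matrix spaces. -/
def doubleTransposeMap {m n : ℕ} (Φ : MatMap m n) : MatMap m n where
  toFun ρ := (Φ ρᵀ)ᵀ
  map_add' x y := by simp
  map_smul' c x := by simp

/-- A time symmetric quantum operation: completely positive, with `Q†(I_n) ≤ I_m`
and `Q(I_m/m) ≤ I_n/n` in the Loewner order. -/
def IsTSOp {m n : ℕ} (Q : MatMap m n) : Prop :=
  IsCP Q ∧ ((1 : Matrix (Fin m) (Fin m) ℂ) - hsAdjoint Q 1).PosSemidef ∧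
    ((n : ℂ)⁻¹ • (1 : Matrix (Fin n) (Fin n) ℂ)
      - Q ((m : ℂ)⁻¹ • (1 : Matrix (Fin m) (Fin m) ℂ))).PosSemidef

section UleAux

variable {m n : ℕ}

lemma psd_real_smul {ι : Type*} [Fintype ι] {M : Matrix ι ι ℂ} (hM : M.PosSemidef)
    {a : ℝ} (ha : 0 ≤ a) : ((a : ℂ) • M).PosSemidef := by
  exact hM.smul (by exact_mod_cast ha)

lemma trace_nonneg_of_psd {d : ℕ} {ρ : Matrix (Fin d) (Fin d) ℂ} (hρ : ρ.PosSemidef) :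
    0 ≤ ρ.trace := by
  exact hρ.trace_nonneg

lemma choi_add (Q R : MatMap m n) : choi (Q + R) = choi Q + choi R := by
  ext p q; simp [choi]

lemma choi_smul (c : ℂ) (Q : MatMap m n) : choi (c • Q) = c • choi Q := by
  ext p q; simp [choi]

lemma choi_zero : choi (0 : MatMap m n) = 0 := by
  ext p q; simp [choi]

lemma isQOp_zero : IsQOp (0 : MatMap m n) := by
  refine ⟨?_, fun ρ hρ => ?_⟩
  · show (choi 0).PosSemidef
    rw [choi_zero]
    exact Matrix.PosSemidef.zero
  · simp only [LinearMap.zero_apply, Matrix.trace_zero]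
    exact trace_nonneg_of_psd hρ

lemma isQOp_combo {Q R : MatMap m n} (hQ : IsQOp Q) (hR : IsQOp R) {a b : ℝ}
    (ha : 0 ≤ a) (hb : 0 ≤ b) (hab : a + b ≤ 1) :
    IsQOp ((a : ℂ) • Q + (b : ℂ) • R) := by
  refine ⟨?_, fun ρ hρ => ?_⟩
  · show (choi _).PosSemidef
    rw [choi_add, choi_smul, choi_smul]
    exact (psd_real_smul hQ.1 ha).add (psd_real_smul hR.1 hb)
  · have h1 := hQ.2 ρ hρ
    have h2 := hR.2 ρ hρ
    have h0 := trace_nonneg_of_psd hρ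
    have ha' : (0:ℂ) ≤ (a:ℂ) := by exact_mod_cast ha
    have hb' : (0:ℂ) ≤ (b:ℂ) := by exact_mod_cast hb
    simp only [LinearMap.add_apply, LinearMap.smul_apply, Matrix.trace_add,
      Matrix.trace_smul, smul_eq_mul]
    calc (a:ℂ) * (Q ρ).trace + (b:ℂ) * (R ρ).trace
        ≤ (a:ℂ) * ρ.trace + (b:ℂ) * ρ.trace :=
          add_le_add (mul_le_mul_of_nonneg_left h1 ha') (mul_le_mul_of_nonneg_left h2 hb')
      _ = ((a + b : ℝ) : ℂ) * ρ.trace := by push_cast; ring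
      _ ≤ 1 * ρ.trace := mul_le_mul_of_nonneg_right (by exact_mod_cast hab) h0
      _ = ρ.trace := one_mul _

end UleAux
section UleAux2

variable {m n : ℕ}

/-- The map `ρ ↦ A ρ Bᴴ`. -/
def sandwich (A B : Matrix (Fin n) (Fin m) ℂ) : MatMap m n where
  toFun ρ := A * ρ * Bᴴ
  map_add' x y := by
    show A * (x + y) * Bᴴ = A * x * Bᴴ + A * y * Bᴴ
    rw [Matrix.mul_add, Matrix.add_mul]
  map_smul' c x := by
    show A * (c • x) * Bᴴ = c • (A * x * Bᴴ)
    rw [Matrix.mul_smul, Matrix.smul_mul]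

/-- The map `ρ ↦ A ρ Aᴴ`. -/
def kraus (A : Matrix (Fin n) (Fin m) ℂ) : MatMap m n := sandwich A A

lemma posSemidef_vecMulVec_star {ι : Type*} [Fintype ι] (v : ι → ℂ) :
    (Matrix.vecMulVec v (star v)).PosSemidef := by
  exact Matrix.posSemidef_vecMulVec_self_star v

lemma choi_kraus (A : Matrix (Fin n) (Fin m) ℂ) :
    choi (kraus A) = Matrix.vecMulVec (fun x => A x.1 x.2)
      (star fun x : Fin n × Fin m => A x.1 x.2) := by
  ext p q
  show (A * Matrix.single p.2 q.2 (1:ℂ) * Aᴴ) p.1 q.1 = _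
  rw [Matrix.vecMulVec_apply]
  simp [Matrix.mul_apply, Matrix.single, Matrix.conjTranspose_apply, ite_and,
    Finset.sum_ite_eq, Finset.mul_sum, mul_comm]

lemma kraus_trace_bound (A : Matrix (Fin n) (Fin m) ℂ) {ρ : Matrix (Fin m) (Fin m) ℂ}
    (hρ : ρ.PosSemidef) :
    (A * ρ * Aᴴ).trace ≤ ((∑ p, ∑ i, Complex.normSq (A p i) : ℝ) : ℂ) * ρ.trace := by
  obtain ⟨B, hB⟩ : ∃ B : Matrix (Fin m) (Fin m) ℂ, ρ = Bᴴ * B := by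
    open scoped MatrixOrder in
    obtain ⟨B, hB⟩ := CStarAlgebra.nonneg_iff_eq_star_mul_self.mp hρ.nonneg
    exact ⟨B, hB⟩
  subst hB
  have htr1 : (A * (Bᴴ * B) * Aᴴ).trace
      = ((∑ p, ∑ k, Complex.normSq ((A * Bᴴ) p k) : ℝ) : ℂ) := by
    have hrw : A * (Bᴴ * B) * Aᴴ = (A * Bᴴ) * (A * Bᴴ)ᴴ := by
      rw [Matrix.conjTranspose_mul, Matrix.conjTranspose_conjTranspose]
      simp only [Matrix.mul_assoc]
    rw [hrw, Matrix.trace]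
    push_cast
    refine Finset.sum_congr rfl fun p _ => ?_
    rw [Matrix.diag_apply, Matrix.mul_apply]
    refine Finset.sum_congr rfl fun k _ => ?_
    rw [Matrix.conjTranspose_apply, ← Complex.mul_conj]
    rfl
  have htr2 : (Bᴴ * B).trace = ((∑ k, ∑ i, Complex.normSq (B k i) : ℝ) : ℂ) := by
    rw [Matrix.trace]
    push_cast
    rw [Finset.sum_comm]
    refine Finset.sum_congr rfl fun i _ => ?_
    rw [Matrix.diag_apply, Matrix.mul_apply]
    refine Finset.sum_congr rfl fun k _ => ?_
    rw [Matrix.conjTranspose_apply, Complex.normSq_eq_conj_mul_self]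
    rfl
  rw [htr1, htr2, ← Complex.ofReal_mul, Complex.real_le_real]
  calc ∑ p, ∑ k, Complex.normSq ((A * Bᴴ) p k)
      ≤ ∑ p, ∑ k, (∑ i, Complex.normSq (A p i)) * (∑ i, Complex.normSq (B k i)) := by
        refine Finset.sum_le_sum fun p _ => Finset.sum_le_sum fun k _ => ?_
        have habs : ‖(A * Bᴴ) p k‖
            ≤ ∑ i, ‖A p i‖ * ‖B k i‖ := by
          rw [Matrix.mul_apply]
          refine (norm_sum_le _ _).trans (le_of_eq ?_)
          refine Finset.sum_congr rfl fun i _ => ?_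
          rw [Matrix.conjTranspose_apply, norm_mul, Complex.star_def, Complex.norm_conj]
        calc Complex.normSq ((A * Bᴴ) p k)
            = ‖(A * Bᴴ) p k‖ ^ 2 := (Complex.sq_norm _).symm
          _ ≤ (∑ i, ‖A p i‖ * ‖B k i‖) ^ 2 := by
              exact pow_le_pow_left₀ (norm_nonneg _) habs 2
          _ ≤ (∑ i, ‖A p i‖ ^ 2) * (∑ i, ‖B k i‖ ^ 2) :=
              Finset.sum_mul_sq_le_sq_mul_sq _ _ _
          _ = (∑ i, Complex.normSq (A p i)) * (∑ i, Complex.normSq (B k i)) := by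
              simp [Complex.sq_norm]
    _ = (∑ p, ∑ i, Complex.normSq (A p i)) * (∑ k, ∑ i, Complex.normSq (B k i)) := by
        rw [Finset.sum_mul_sum]

lemma kraus_mem_scaled (A : Matrix (Fin n) (Fin m) ℂ) :
    ∃ c : ℝ, 0 < c ∧ IsQOp ((c : ℂ) • kraus A) := by
  set N : ℝ := ∑ p, ∑ i, Complex.normSq (A p i) with hN
  have hN0 : 0 ≤ N :=
    Finset.sum_nonneg fun _ _ => Finset.sum_nonneg fun _ _ => Complex.normSq_nonneg _
  refine ⟨(N + 1)⁻¹, by positivity, ?_, ?_⟩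
  · show (choi _).PosSemidef
    rw [choi_smul, choi_kraus]
    exact psd_real_smul (posSemidef_vecMulVec_star _) (by positivity)
  · intro ρ hρ
    have hb := kraus_trace_bound A hρ
    have h0 := trace_nonneg_of_psd hρ
    have hc' : (0:ℂ) ≤ (((N + 1)⁻¹ : ℝ) : ℂ) := by
      rw [Complex.zero_le_real]; positivity
    have happ : ((((N + 1)⁻¹ : ℝ) : ℂ) • kraus A) ρ = (((N + 1)⁻¹ : ℝ) : ℂ) • (A * ρ * Aᴴ) := rfl
    rw [happ, Matrix.trace_smul, smul_eq_mul]
    calc (((N + 1)⁻¹ : ℝ) : ℂ) * (A * ρ * Aᴴ).trace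
        ≤ (((N + 1)⁻¹ : ℝ) : ℂ) * (((N : ℝ) : ℂ) * ρ.trace) :=
          mul_le_mul_of_nonneg_left hb hc'
      _ = (((N + 1)⁻¹ * N : ℝ) : ℂ) * ρ.trace := by push_cast; ring
      _ ≤ 1 * ρ.trace := by
          refine mul_le_mul_of_nonneg_right ?_ h0
          rw [show (1 : ℂ) = ((1 : ℝ) : ℂ) by norm_num, Complex.real_le_real,
            inv_mul_le_iff₀ (by positivity)]
          linarith
      _ = ρ.trace := one_mul _

end UleAux2
section UleAux3

variable {m n : ℕ}

lemma kraus_mem_span (A : Matrix (Fin n) (Fin m) ℂ) :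
    kraus A ∈ Submodule.span ℂ {Q : MatMap m n | IsQOp Q} := by
  obtain ⟨c, hc, hq⟩ := kraus_mem_scaled A
  have hrw : kraus A = ((c : ℂ))⁻¹ • ((c : ℂ) • kraus A) := by
    rw [smul_smul, inv_mul_cancel₀ (by exact_mod_cast hc.ne'), one_smul]
  rw [hrw]
  exact Submodule.smul_mem _ _ (Submodule.subset_span hq)

lemma sandwich_mem_span (A B : Matrix (Fin n) (Fin m) ℂ) :
    sandwich A B ∈ Submodule.span ℂ {Q : MatMap m n | IsQOp Q} := by
  have key : sandwich A B = (2⁻¹ : ℂ) • (kraus (A + B) - kraus A - kraus B)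
      + ((2⁻¹ : ℂ) * Complex.I) • (kraus (A + Complex.I • B) - kraus A - kraus B) := by
    apply LinearMap.ext; intro ρ
    simp only [LinearMap.add_apply, LinearMap.smul_apply, LinearMap.sub_apply]
    show A * ρ * Bᴴ = (2⁻¹ : ℂ) • ((A + B) * ρ * (A + B)ᴴ - A * ρ * Aᴴ - B * ρ * Bᴴ)
      + ((2⁻¹ : ℂ) * Complex.I) • ((A + Complex.I • B) * ρ * (A + Complex.I • B)ᴴ
          - A * ρ * Aᴴ - B * ρ * Bᴴ)
    rw [Matrix.conjTranspose_add, Matrix.conjTranspose_add, Matrix.conjTranspose_smul]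
    simp only [Matrix.add_mul, Matrix.mul_add, Matrix.smul_mul, Matrix.mul_smul,
      Complex.star_def, Complex.conj_I, Matrix.mul_neg, Matrix.neg_mul, smul_smul, neg_smul,
      smul_neg, neg_mul, mul_neg]
    match_scalars <;> simp [Complex.ext_iff] <;> norm_num
  rw [key]
  refine Submodule.add_mem _ (Submodule.smul_mem _ _ ?_) (Submodule.smul_mem _ _ ?_) <;>
    exact Submodule.sub_mem _ (Submodule.sub_mem _ (kraus_mem_span _) (kraus_mem_span _))
      (kraus_mem_span _)

lemma sandwich_basis_apply (p : Fin n) (i : Fin m) (q : Fin n) (j : Fin m)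
    (M : Matrix (Fin m) (Fin m) ℂ) (a : Fin n) (b : Fin n) :
    (sandwich (Matrix.single p i 1) (Matrix.single q j 1) M) a b
      = if a = p ∧ b = q then M i j else 0 := by
  show (Matrix.single p i (1:ℂ) * M * (Matrix.single q j (1:ℂ))ᴴ) a b = _
  have hct : (Matrix.single q j (1:ℂ))ᴴ = Matrix.single j q 1 := by
    ext x y
    simp [Matrix.conjTranspose_apply, Matrix.single, and_comm, apply_ite
      (starRingEnd ℂ)]
  rw [hct]
  simp [Matrix.mul_apply, Matrix.single, ite_and, Finset.sum_ite_eq,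
    Finset.mul_sum, eq_comm]
  split_ifs <;> rfl

lemma map_eq_sum_sandwich (Φ : MatMap m n) :
    Φ = ∑ i : Fin m, ∑ j : Fin m, ∑ p : Fin n, ∑ q : Fin n,
      (Φ (Matrix.single i j 1) p q) •
        sandwich (Matrix.single p i 1) (Matrix.single q j 1) := by
  apply LinearMap.ext; intro M
  ext a b
  have hexp : Φ M = ∑ i, ∑ j, (M i j) • Φ (Matrix.single i j 1) := by
    conv_lhs => rw [Matrix.matrix_eq_sum_single M]
    rw [_root_.map_sum]
    refine Finset.sum_congr rfl fun i _ => ?_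
    rw [_root_.map_sum]
    refine Finset.sum_congr rfl fun j _ => ?_
    rw [show Matrix.single i j (M i j)
        = (M i j) • Matrix.single i j (1:ℂ) by
      rw [Matrix.smul_single, smul_eq_mul, mul_one], _root_.map_smul]
  rw [hexp]
  simp only [LinearMap.sum_apply, LinearMap.smul_apply, Matrix.sum_apply,
    Matrix.smul_apply, sandwich_basis_apply, smul_eq_mul, mul_ite, mul_zero]
  refine Finset.sum_congr rfl fun i _ => ?_
  refine Finset.sum_congr rfl fun j _ => ?_
  simp [ite_and, Finset.sum_ite_eq, mul_comm]

lemma span_isQOp_top :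
    Submodule.span ℂ {Q : MatMap m n | IsQOp Q} = ⊤ := by
  rw [eq_top_iff]
  intro Φ _
  rw [map_eq_sum_sandwich Φ]
  refine Submodule.sum_mem _ fun i _ => Submodule.sum_mem _ fun j _ =>
    Submodule.sum_mem _ fun p _ => Submodule.sum_mem _ fun q _ =>
      Submodule.smul_mem _ _ (sandwich_mem_span _ _)

/-- The conjugation `ρ ↦ (Φ(ρᴴ))ᴴ` of a linear map between matrix spaces. -/
def conjMap (Φ : MatMap m n) : MatMap m n where
  toFun ρ := (Φ ρᴴ)ᴴ
  map_add' x y := by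
    show (Φ (x + y)ᴴ)ᴴ = (Φ xᴴ)ᴴ + (Φ yᴴ)ᴴ
    rw [Matrix.conjTranspose_add, _root_.map_add, Matrix.conjTranspose_add]
  map_smul' c x := by
    show (Φ (c • x)ᴴ)ᴴ = c • (Φ xᴴ)ᴴ
    rw [Matrix.conjTranspose_smul, _root_.map_smul, Matrix.conjTranspose_smul, star_star]

lemma conjMap_apply (Φ : MatMap m n) (ρ : Matrix (Fin m) (Fin m) ℂ) :
    conjMap Φ ρ = (Φ ρᴴ)ᴴ := rfl

lemma conjMap_add (Φ Ψ : MatMap m n) : conjMap (Φ + Ψ) = conjMap Φ + conjMap Ψ := by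
  apply LinearMap.ext; intro ρ
  simp [conjMap_apply]

lemma conjMap_sub (Φ Ψ : MatMap m n) : conjMap (Φ - Ψ) = conjMap Φ - conjMap Ψ := by
  apply LinearMap.ext; intro ρ
  simp [conjMap_apply, Matrix.conjTranspose_sub]

lemma conjMap_smul (z : ℂ) (Φ : MatMap m n) : conjMap (z • Φ) = star z • conjMap Φ := by
  apply LinearMap.ext; intro ρ
  simp [conjMap_apply, Matrix.conjTranspose_smul]

lemma conjMap_of_isCP {Q : MatMap m n} (hQ : IsCP Q) : conjMap Q = Q := by
  have hH : (choi Q)ᴴ = choi Q := hQ.1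
  have hb : ∀ (i j : Fin m) (p q : Fin n),
      star (Q (Matrix.single i j 1) q p) = Q (Matrix.single j i 1) p q := by
    intro i j p q
    have := congrFun (congrFun hH ((p, j) : Fin n × Fin m)) ((q, i) : Fin n × Fin m)
    simpa [Matrix.conjTranspose_apply, choi] using this
  have hbM : ∀ (i j : Fin m), (Q (Matrix.single i j 1))ᴴ
      = Q (Matrix.single j i 1) := by
    intro i j
    ext p q
    rw [Matrix.conjTranspose_apply, hb]
  apply LinearMap.ext; intro M
  rw [conjMap_apply]
  have e1 : Q Mᴴ = ∑ i, ∑ j, star (M j i) • Q (Matrix.single i j 1) := by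
    conv_lhs => rw [Matrix.matrix_eq_sum_single Mᴴ]
    rw [_root_.map_sum]
    refine Finset.sum_congr rfl fun i _ => ?_
    rw [_root_.map_sum]
    refine Finset.sum_congr rfl fun j _ => ?_
    rw [show Matrix.single i j (Mᴴ i j)
        = star (M j i) • Matrix.single i j (1:ℂ) by
      rw [Matrix.smul_single, smul_eq_mul, mul_one, Matrix.conjTranspose_apply],
      _root_.map_smul]
  have e2 : Q M = ∑ j, ∑ i, (M j i) • Q (Matrix.single j i 1) := by
    conv_lhs => rw [Matrix.matrix_eq_sum_single M]
    rw [_root_.map_sum]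
    refine Finset.sum_congr rfl fun j _ => ?_
    rw [_root_.map_sum]
    refine Finset.sum_congr rfl fun i _ => ?_
    rw [show Matrix.single j i (M j i)
        = (M j i) • Matrix.single j i (1:ℂ) by
      rw [Matrix.smul_single, smul_eq_mul, mul_one], _root_.map_smul]
  rw [e1, e2, Matrix.conjTranspose_sum, Finset.sum_comm]
  refine Finset.sum_congr rfl fun i _ => ?_
  rw [Matrix.conjTranspose_sum]
  refine Finset.sum_congr rfl fun j _ => ?_
  rw [Matrix.conjTranspose_smul, star_star, hbM]

end UleAux3
section UleAux4

variable {m n : ℕ}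

lemma smul_cancel_c {α : Type*} [AddCommMonoid α] [Module ℂ α] {c : ℂ} (hc : c ≠ 0)
    {U V : α} (h : c • U = c • V) : U = V := by
  have h2 := congrArg (fun W => c⁻¹ • W) h
  simpa [smul_smul, inv_mul_cancel₀ hc] using h2

/-- The cone of nonnegative multiples of quantum operations. -/
def qCone (m n : ℕ) : Set (MatMap m n) :=
  {Φ | ∃ c : ℝ, 0 < c ∧ IsQOp ((c : ℂ) • Φ)}

lemma isQOp_mem_qCone {Q : MatMap m n} (hQ : IsQOp Q) : Q ∈ qCone m n :=
  ⟨1, one_pos, by simpa using hQ⟩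

lemma zero_mem_qCone : (0 : MatMap m n) ∈ qCone m n := isQOp_mem_qCone isQOp_zero

lemma qCone_add {Φ Ψ : MatMap m n} (hΦ : Φ ∈ qCone m n) (hΨ : Ψ ∈ qCone m n) :
    Φ + Ψ ∈ qCone m n := by
  obtain ⟨c, hc, hcq⟩ := hΦ
  obtain ⟨d, hd, hdq⟩ := hΨ
  have hcd : (0:ℝ) < c + d := by linarith
  have h1 : ((d / (c + d) : ℝ) : ℂ) * (c : ℂ) = ((c * d / (c + d) : ℝ) : ℂ) := by
    push_cast
    field_simp
  have h2 : ((c / (c + d) : ℝ) : ℂ) * (d : ℂ) = ((c * d / (c + d) : ℝ) : ℂ) := by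
    push_cast
    field_simp
  refine ⟨c * d / (c + d), by positivity, ?_⟩
  have hsum : ((c * d / (c + d) : ℝ) : ℂ) • (Φ + Ψ)
      = ((d / (c + d) : ℝ) : ℂ) • ((c : ℂ) • Φ) + ((c / (c + d) : ℝ) : ℂ) • ((d : ℂ) • Ψ) := by
    rw [smul_add, smul_smul, smul_smul, h1, h2]
  rw [hsum]
  refine isQOp_combo hcq hdq (by positivity) (by positivity) ?_
  rw [← add_div, add_comm d c, div_self hcd.ne']

lemma qCone_smul {Φ : MatMap m n} (hΦ : Φ ∈ qCone m n) {r : ℝ} (hr : 0 ≤ r) :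
    (r : ℂ) • Φ ∈ qCone m n := by
  rcases hr.eq_or_lt with h | h
  · rw [← h]
    simpa using zero_mem_qCone
  · obtain ⟨c, hc, hq⟩ := hΦ
    refine ⟨c / r, by positivity, ?_⟩
    have harg : ((c / r : ℝ) : ℂ) • ((r : ℂ) • Φ) = (c : ℂ) • Φ := by
      rw [smul_smul, ← Complex.ofReal_mul, div_mul_cancel₀ _ h.ne']
    rw [harg]
    exact hq

lemma qCone_conjMap_fix {Φ : MatMap m n} (hΦ : Φ ∈ qCone m n) : conjMap Φ = Φ := by
  obtain ⟨c, hc, hq⟩ := hΦ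
  have hfix : conjMap ((c : ℂ) • Φ) = (c : ℂ) • Φ := conjMap_of_isCP hq.1
  rw [conjMap_smul] at hfix
  have hstar : star ((c : ℝ) : ℂ) = ((c : ℝ) : ℂ) := by
    simp [Complex.star_def, Complex.conj_ofReal]
  rw [hstar] at hfix
  exact smul_cancel_c (by exact_mod_cast hc.ne') hfix

/-- Existence of a decomposition into cone elements. -/
def HasDec (Φ : MatMap m n) : Prop :=
  ∃ A B C D : MatMap m n, A ∈ qCone m n ∧ B ∈ qCone m n ∧ C ∈ qCone m n ∧ D ∈ qCone m n ∧
    Φ = A - B + Complex.I • (C - D)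

lemma hasDec_add {Φ Ψ : MatMap m n} (hΦ : HasDec Φ) (hΨ : HasDec Ψ) : HasDec (Φ + Ψ) := by
  obtain ⟨A, B, C, D, hA, hB, hC, hD, hE⟩ := hΦ
  obtain ⟨A', B', C', D', hA', hB', hC', hD', hE'⟩ := hΨ
  exact ⟨A + A', B + B', C + C', D + D', qCone_add hA hA', qCone_add hB hB',
    qCone_add hC hC', qCone_add hD hD', by rw [hE, hE']; module⟩

lemma hasDec_realSmul {Φ : MatMap m n} (hΦ : HasDec Φ) (r : ℝ) : HasDec ((r : ℂ) • Φ) := by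
  obtain ⟨A, B, C, D, hA, hB, hC, hD, hE⟩ := hΦ
  rcases le_total 0 r with hr | hr
  · exact ⟨(r:ℂ) • A, (r:ℂ) • B, (r:ℂ) • C, (r:ℂ) • D, qCone_smul hA hr, qCone_smul hB hr,
      qCone_smul hC hr, qCone_smul hD hr, by rw [hE]; module⟩
  · have hr' : (0:ℝ) ≤ -r := by linarith
    exact ⟨((-r : ℝ):ℂ) • B, ((-r : ℝ):ℂ) • A, ((-r : ℝ):ℂ) • D, ((-r : ℝ):ℂ) • C,
      qCone_smul hB hr', qCone_smul hA hr', qCone_smul hD hr', qCone_smul hC hr',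
      by rw [hE]; push_cast; module⟩

lemma hasDec_Ismul {Φ : MatMap m n} (hΦ : HasDec Φ) : HasDec (Complex.I • Φ) := by
  obtain ⟨A, B, C, D, hA, hB, hC, hD, hE⟩ := hΦ
  refine ⟨D, C, A, B, hD, hC, hA, hB, ?_⟩
  rw [hE]
  match_scalars <;> simp [Complex.ext_iff]

lemma hasDec_smul {Φ : MatMap m n} (hΦ : HasDec Φ) (z : ℂ) : HasDec (z • Φ) := by
  have hzz : z • Φ = (z.re : ℂ) • Φ + (z.im : ℂ) • (Complex.I • Φ) := by
    rw [smul_smul, ← add_smul, Complex.re_add_im]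
  rw [hzz]
  exact hasDec_add (hasDec_realSmul hΦ _) (hasDec_realSmul (hasDec_Ismul hΦ) _)

lemma hasDec_all (Φ : MatMap m n) : HasDec Φ := by
  have hΦ : Φ ∈ Submodule.span ℂ {Q : MatMap m n | IsQOp Q} := by
    rw [span_isQOp_top]
    trivial
  induction hΦ using Submodule.span_induction with
  | mem Q hQ => exact ⟨Q, 0, 0, 0, isQOp_mem_qCone hQ, zero_mem_qCone, zero_mem_qCone,
      zero_mem_qCone, by simp⟩
  | zero => exact ⟨0, 0, 0, 0, zero_mem_qCone, zero_mem_qCone, zero_mem_qCone,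
      zero_mem_qCone, by simp⟩
  | add x y hx hy ihx ihy => exact hasDec_add ihx ihy
  | smul z x hx ihx => exact hasDec_smul ihx z

end UleAux4

set_option maxHeartbeats 1000000

/-- A map of quantum operations that preserves convex combinations and the zero map
extends to a unique `ℂ`-linear map between the spaces of all linear maps. -/
theorem unique_linear_extension (m n m' n' : ℕ)
    (S : MatMap m n → MatMap m' n')
    (hmap : ∀ Q : MatMap m n, IsQOp Q → IsQOp (S Q))
    (hconv : ∀ Q R : MatMap m n, IsQOp Q → IsQOp R → ∀ p : ℝ, 0 ≤ p → p ≤ 1 →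
      S ((p : ℂ) • Q + ((1 - p : ℝ) : ℂ) • R)
        = (p : ℂ) • S Q + ((1 - p : ℝ) : ℂ) • S R)
    (hzero : S 0 = 0) :
    ∃! L : MatMap m n →ₗ[ℂ] MatMap m' n', ∀ Q : MatMap m n, IsQOp Q → L Q = S Q := by
  classical
  have hzK : IsQOp (0 : MatMap m n) := isQOp_zero
  have hspan : Submodule.span ℂ {Q : MatMap m n | IsQOp Q} = ⊤ := span_isQOp_top
  -- `S` commutes with scaling by scalars in `[0,1]`
  have hscale : ∀ Q : MatMap m n, IsQOp Q → ∀ p : ℝ, 0 ≤ p → p ≤ 1 →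
      S ((p : ℂ) • Q) = (p : ℂ) • S Q := by
    intro Q hQ p hp hp1
    have h := hconv Q 0 hQ hzK p hp hp1
    simpa [hzero] using h
  -- well-definedness of the rescaled extension
  have hwd : ∀ (Φ : MatMap m n) (c d : ℝ), 0 < c → 0 < d → c ≤ d →
      IsQOp ((c : ℂ) • Φ) → IsQOp ((d : ℂ) • Φ) →
      ((c⁻¹ : ℝ) : ℂ) • S ((c : ℂ) • Φ) = ((d⁻¹ : ℝ) : ℂ) • S ((d : ℂ) • Φ) := by
    intro Φ c d hc hd hcd hcQ hdQ
    have he : (c : ℂ) • Φ = ((c / d : ℝ) : ℂ) • ((d : ℂ) • Φ) := by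
      rw [smul_smul, ← Complex.ofReal_mul, div_mul_cancel₀ _ hd.ne']
    rw [he, hscale _ hdQ _ (by positivity) (by rw [div_le_one hd]; exact hcd),
      smul_smul]
    congr 1
    have hc0 : (c : ℝ) ≠ 0 := hc.ne'
    have hd0 : (d : ℝ) ≠ 0 := hd.ne'
    push_cast
    field_simp
  -- the extension to the cone
  obtain ⟨T, hTspec⟩ : ∃ T : MatMap m n → MatMap m' n',
      ∀ (Φ : MatMap m n) (c : ℝ), 0 < c → IsQOp ((c : ℂ) • Φ) →
        T Φ = ((c⁻¹ : ℝ) : ℂ) • S ((c : ℂ) • Φ) := by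
    refine ⟨fun Φ => if h : Φ ∈ qCone m n then
      (((h.choose)⁻¹ : ℝ) : ℂ) • S ((h.choose : ℂ) • Φ) else 0, ?_⟩
    intro Φ c hc hq
    have hmem : Φ ∈ qCone m n := ⟨c, hc, hq⟩
    simp only [dif_pos hmem]
    obtain ⟨hd, hdq⟩ := hmem.choose_spec
    rcases le_total hmem.choose c with h | h
    · exact hwd Φ _ c hd hc h hdq hq
    · exact (hwd Φ c _ hc hd h hq hdq).symm
  have hTK : ∀ Q : MatMap m n, IsQOp Q → T Q = S Q := by
    intro Q hQ
    rw [hTspec Q 1 one_pos (by simpa using hQ)]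
    simp
  have hT0 : T (0 : MatMap m n) = 0 := by rw [hTK 0 hzK, hzero]
  -- additivity of `T` on the cone
  have hTadd : ∀ Φ Ψ : MatMap m n, Φ ∈ qCone m n → Ψ ∈ qCone m n →
      T (Φ + Ψ) = T Φ + T Ψ := by
    intro Φ Ψ hΦ hΨ
    obtain ⟨c, hc, hcq⟩ := hΦ
    obtain ⟨d, hd, hdq⟩ := hΨ
    have hcd : (0:ℝ) < c + d := by linarith
    have h1 : ((d / (c + d) : ℝ) : ℂ) * (c : ℂ) = ((c * d / (c + d) : ℝ) : ℂ) := by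
      push_cast
      field_simp
    have h2 : ((c / (c + d) : ℝ) : ℂ) * (d : ℂ) = ((c * d / (c + d) : ℝ) : ℂ) := by
      push_cast
      field_simp
    have hsum : ((c * d / (c + d) : ℝ) : ℂ) • (Φ + Ψ)
        = ((d / (c + d) : ℝ) : ℂ) • ((c : ℂ) • Φ)
          + ((c / (c + d) : ℝ) : ℂ) • ((d : ℂ) • Ψ) := by
      rw [smul_add, smul_smul, smul_smul, h1, h2]
    have he0 : (0:ℝ) < c * d / (c + d) := by positivity
    have hq : IsQOp (((c * d / (c + d) : ℝ) : ℂ) • (Φ + Ψ)) := by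
      rw [hsum]
      refine isQOp_combo hcq hdq (by positivity) (by positivity) ?_
      rw [← add_div, add_comm d c, div_self hcd.ne']
    rw [hTspec _ _ he0 hq, hTspec _ c hc hcq, hTspec _ d hd hdq, hsum]
    have hp0 : (0:ℝ) ≤ d / (c + d) := by positivity
    have hp1 : d / (c + d) ≤ 1 := by rw [div_le_one hcd]; linarith
    have hco : ((c / (c + d) : ℝ) : ℂ) = ((1 - d / (c + d) : ℝ) : ℂ) := by
      norm_cast
      field_simp
      ring
    rw [hco, hconv _ _ hcq hdq _ hp0 hp1, smul_add, smul_smul, smul_smul]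
    have k1 : (((c * d / (c + d))⁻¹ : ℝ) : ℂ) * ((d / (c + d) : ℝ) : ℂ)
        = ((c⁻¹ : ℝ) : ℂ) := by
      push_cast
      field_simp
    have k2 : (((c * d / (c + d))⁻¹ : ℝ) : ℂ) * ((1 - d / (c + d) : ℝ) : ℂ)
        = ((d⁻¹ : ℝ) : ℂ) := by
      push_cast
      field_simp
      ring
    rw [k1, k2]
  -- homogeneity of `T` on the cone
  have hTsm : ∀ Φ : MatMap m n, Φ ∈ qCone m n → ∀ r : ℝ, 0 ≤ r →
      T ((r : ℂ) • Φ) = (r : ℂ) • T Φ := by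
    intro Φ hΦ r hr
    rcases hr.eq_or_lt with h | h
    · rw [← h]
      simpa using hT0
    · obtain ⟨c, hc, hq⟩ := hΦ
      have harg : ((c / r : ℝ) : ℂ) • ((r : ℂ) • Φ) = (c : ℂ) • Φ := by
        rw [smul_smul, ← Complex.ofReal_mul, div_mul_cancel₀ _ h.ne']
      have h1 : IsQOp (((c / r : ℝ) : ℂ) • ((r : ℂ) • Φ)) := by rw [harg]; exact hq
      rw [hTspec _ (c / r) (by positivity) h1, harg, hTspec _ c hc hq, smul_smul]
      congr 1
      have hc0 : (c : ℝ) ≠ 0 := hc.ne'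
      have hr0 : (r : ℝ) ≠ 0 := h.ne'
      push_cast
      field_simp
  -- the putative linear extension on decompositions is well defined
  have hwdT : ∀ A B C D A' B' C' D' : MatMap m n, A ∈ qCone m n → B ∈ qCone m n →
      C ∈ qCone m n → D ∈ qCone m n → A' ∈ qCone m n → B' ∈ qCone m n → C' ∈ qCone m n →
      D' ∈ qCone m n →
      A - B + Complex.I • (C - D) = A' - B' + Complex.I • (C' - D') →
      T A - T B + Complex.I • (T C - T D) = T A' - T B' + Complex.I • (T C' - T D') := by
    intro A B C D A' B' C' D' hA hB hC hD hA' hB' hC' hD' heq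
    have hconjcomb : ∀ X Y Z W : MatMap m n, X ∈ qCone m n → Y ∈ qCone m n →
        Z ∈ qCone m n → W ∈ qCone m n →
        conjMap (X - Y + Complex.I • (Z - W)) = X - Y - Complex.I • (Z - W) := by
      intro X Y Z W hX hY hZ hW
      rw [conjMap_add, conjMap_sub, conjMap_smul, conjMap_sub, qCone_conjMap_fix hX,
        qCone_conjMap_fix hY, qCone_conjMap_fix hZ, qCone_conjMap_fix hW,
        Complex.star_def, Complex.conj_I]
      module
    have heq2 := congrArg conjMap heq
    rw [hconjcomb A B C D hA hB hC hD, hconjcomb A' B' C' D' hA' hB' hC' hD'] at heq2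
    have h3 : (2:ℂ) • (A - B) = (2:ℂ) • (A' - B') := by
      have h4 := congrArg₂ (fun u v : MatMap m n => u + v) heq heq2
      calc (2:ℂ) • (A - B)
          = (A - B + Complex.I • (C - D)) + (A - B - Complex.I • (C - D)) := by module
        _ = (A' - B' + Complex.I • (C' - D')) + (A' - B' - Complex.I • (C' - D')) := h4
        _ = (2:ℂ) • (A' - B') := by module
    have hX : A - B = A' - B' := smul_cancel_c two_ne_zero h3
    have hY : C - D = C' - D' := by
      rw [hX] at heq
      have h5 := add_left_cancel heq
      exact smul_cancel_c Complex.I_ne_zero h5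
    have hAB : A + B' = A' + B := sub_eq_sub_iff_add_eq_add.mp hX
    have hCD : C + D' = C' + D := sub_eq_sub_iff_add_eq_add.mp hY
    have hTX : T A - T B = T A' - T B' := by
      refine sub_eq_sub_iff_add_eq_add.mpr ?_
      rw [← hTadd A B' hA hB', ← hTadd A' B hA' hB, hAB]
    have hTY : T C - T D = T C' - T D' := by
      refine sub_eq_sub_iff_add_eq_add.mpr ?_
      rw [← hTadd C D' hC hD', ← hTadd C' D hC' hD, hCD]
    rw [hTX, hTY]
  -- choose decompositions
  have hdec : ∀ Φ : MatMap m n, ∃ A B C D : MatMap m n, A ∈ qCone m n ∧ B ∈ qCone m n ∧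
      C ∈ qCone m n ∧ D ∈ qCone m n ∧ Φ = A - B + Complex.I • (C - D) :=
    fun Φ => hasDec_all Φ
  choose fA fB fC fD hfA hfB hfC hfD hfE using hdec
  set Lf : MatMap m n → MatMap m' n' := fun Φ =>
    T (fA Φ) - T (fB Φ) + Complex.I • (T (fC Φ) - T (fD Φ)) with hLf
  have hLspec : ∀ Φ A B C D : MatMap m n, A ∈ qCone m n → B ∈ qCone m n → C ∈ qCone m n →
      D ∈ qCone m n → Φ = A - B + Complex.I • (C - D) →
      Lf Φ = T A - T B + Complex.I • (T C - T D) := by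
    intro Φ A B C D hA hB hC hD hEq
    exact hwdT (fA Φ) (fB Φ) (fC Φ) (fD Φ) A B C D (hfA Φ) (hfB Φ) (hfC Φ) (hfD Φ)
      hA hB hC hD ((hfE Φ).symm.trans hEq)
  have hLadd : ∀ x y : MatMap m n, Lf (x + y) = Lf x + Lf y := by
    intro x y
    have h1 := hLspec (x + y) (fA x + fA y) (fB x + fB y) (fC x + fC y) (fD x + fD y)
      (qCone_add (hfA x) (hfA y)) (qCone_add (hfB x) (hfB y)) (qCone_add (hfC x) (hfC y))
      (qCone_add (hfD x) (hfD y)) (by (conv_lhs => rw [hfE x, hfE y]); module)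
    rw [h1, hTadd _ _ (hfA x) (hfA y), hTadd _ _ (hfB x) (hfB y), hTadd _ _ (hfC x) (hfC y),
      hTadd _ _ (hfD x) (hfD y)]
    simp only [hLf]
    module
  have hLreal : ∀ (r : ℝ) (x : MatMap m n), Lf ((r : ℂ) • x) = (r : ℂ) • Lf x := by
    intro r x
    rcases le_total 0 r with hr | hr
    · have h1 := hLspec ((r : ℂ) • x) ((r:ℂ) • fA x) ((r:ℂ) • fB x) ((r:ℂ) • fC x)
        ((r:ℂ) • fD x) (qCone_smul (hfA x) hr) (qCone_smul (hfB x) hr)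
        (qCone_smul (hfC x) hr) (qCone_smul (hfD x) hr)
        (by (conv_lhs => rw [hfE x]); module)
      rw [h1, hTsm _ (hfA x) r hr, hTsm _ (hfB x) r hr, hTsm _ (hfC x) r hr,
        hTsm _ (hfD x) r hr]
      simp only [hLf]
      module
    · have hr' : (0:ℝ) ≤ -r := by linarith
      have h1 := hLspec ((r : ℂ) • x) (((-r:ℝ):ℂ) • fB x) (((-r:ℝ):ℂ) • fA x)
        (((-r:ℝ):ℂ) • fD x) (((-r:ℝ):ℂ) • fC x) (qCone_smul (hfB x) hr')
        (qCone_smul (hfA x) hr') (qCone_smul (hfD x) hr') (qCone_smul (hfC x) hr')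
        (by (conv_lhs => rw [hfE x]); push_cast; module)
      rw [h1, hTsm _ (hfB x) _ hr', hTsm _ (hfA x) _ hr', hTsm _ (hfD x) _ hr',
        hTsm _ (hfC x) _ hr']
      simp only [hLf]
      push_cast
      module
  have hLI : ∀ x : MatMap m n, Lf (Complex.I • x) = Complex.I • Lf x := by
    intro x
    have h1 := hLspec (Complex.I • x) (fD x) (fC x) (fA x) (fB x) (hfD x) (hfC x)
      (hfA x) (hfB x) (by (conv_lhs => rw [hfE x]); match_scalars <;> simp [Complex.ext_iff])
    rw [h1]
    simp only [hLf]
    match_scalars <;> simp [Complex.ext_iff]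
  have hLsmul : ∀ (z : ℂ) (x : MatMap m n), Lf (z • x) = z • Lf x := by
    intro z x
    have hzz : z • x = (z.re : ℂ) • x + (z.im : ℂ) • (Complex.I • x) := by
      rw [smul_smul, ← add_smul, Complex.re_add_im]
    rw [hzz, hLadd, hLreal, hLreal, hLI, smul_smul, ← add_smul, Complex.re_add_im]
  refine ⟨{ toFun := Lf, map_add' := hLadd, map_smul' := fun z x => hLsmul z x }, ?_, ?_⟩
  · intro Q hQ
    have h1 := hLspec Q Q 0 0 0 (isQOp_mem_qCone hQ) zero_mem_qCone zero_mem_qCone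
      zero_mem_qCone (by simp)
    show Lf Q = S Q
    rw [h1, hT0, hTK Q hQ]
    simp
  · intro L' hL'
    have hagree : ∀ Q : MatMap m n, IsQOp Q → L' Q = Lf Q := by
      intro Q hQ
      have h1 := hLspec Q Q 0 0 0 (isQOp_mem_qCone hQ) zero_mem_qCone zero_mem_qCone
        zero_mem_qCone (by simp)
      rw [hL' Q hQ, h1, hT0, hTK Q hQ]
      simp
    exact LinearMap.ext_on hspan fun Q hQ => hagree Q hQ
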